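/- Let 1 ≤ j ≤ k−1 be integers, V a finite set, E ⊆ V^{(k)}, and J ⊆ V^{(j)} nonempty. If (J,E) is an edge-minimal traversable pair (i.e. J is traversable in (V,E) but not in (V,E∖{e}) for any e ∈ E), then |E| ≤ |J| − 1. -/

import Mathlib

open Finset Filter

/-- A subfamily `Jstar ⊆ Jfam` of `j`-sets is `Jfam`-traversable in the `k`-graph `(V, E)`:
for any two distinct `A, B ∈ Jstar` there is a sequence of edges `e_0, …, e_m ∈ E` with
`A ⊆ e_0`, `B ⊆ e_m`, such that the intersection of any two consecutive edges contains some
`j`-set belonging to `Jfam`.  (Singletons are trivially traversable.) -/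
def TravIn {V : Type*} [DecidableEq V] (Jfam E Jstar : Finset (Finset V)) : Prop :=
  ∀ A ∈ Jstar, ∀ B ∈ Jstar, A ≠ B →
    ∃ (m : ℕ) (es : Fin (m + 1) → Finset V),
      (∀ i, es i ∈ E) ∧ A ⊆ es 0 ∧ B ⊆ es (Fin.last m) ∧
      ∀ i : Fin m, ∃ I ∈ Jfam, I ⊆ es i.castSucc ∧ I ⊆ es i.succ

/-- The family `Jfam` is traversable in `(V, E)` if it is `Jfam`-traversable. -/
def Trav {V : Type*} [DecidableEq V] (Jfam E : Finset (Finset V)) : Prop :=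
  TravIn Jfam E Jfam

/-- A triple `(J0, E1, E2)` is traversable if `J0` is traversable in both the red `k`-graph
`(V, E1)` and the blue `k`-graph `(V, E2)`. -/
def TravTriple {V : Type*} [DecidableEq V] (J0 E1 E2 : Finset (Finset V)) : Prop :=
  Trav J0 E1 ∧ Trav J0 E2

/-- A triple `(J0, E1, E2)` is an edge-minimal traversable triple if it is traversable and
removing any edge from `E1` or from `E2` destroys traversability. -/
def EdgeMinTravTriple {V : Type*} [DecidableEq V] (J0 E1 E2 : Finset (Finset V)) : Prop :=
  TravTriple J0 E1 E2 ∧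
  (∀ e ∈ E1, ¬ Trav J0 (E1.erase e)) ∧
  (∀ e ∈ E2, ¬ Trav J0 (E2.erase e))

namespace EdgeMinAux

variable {V : Type*} [DecidableEq V]

/-- One step: two members of `J` contained in a common edge of `E`. -/
def Stp (J E : Finset (Finset V)) (A B : Finset V) : Prop :=
  A ∈ J ∧ B ∈ J ∧ ∃ e ∈ E, A ⊆ e ∧ B ⊆ e

def Conn (J E : Finset (Finset V)) (A B : Finset V) : Prop :=
  Relation.ReflTransGen (Stp J E) A B

lemma stp_symm {J E : Finset (Finset V)} : Symmetric (Stp J E) := by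
  rintro A B ⟨hA, hB, e, he, h1, h2⟩
  exact ⟨hB, hA, e, he, h2, h1⟩

lemma conn_symm {J E : Finset (Finset V)} {A B : Finset V}
    (h : Conn J E A B) : Conn J E B A :=
  by
  haveI : Std.Symm (Stp J E) := ⟨fun a b h => stp_symm h⟩
  exact Relation.ReflTransGen.symmetric.symm _ _ h

lemma conn_trans {J E : Finset (Finset V)} {A B C : Finset V}
    (h : Conn J E A B) (h' : Conn J E B C) : Conn J E A C :=
  h.trans h'

lemma conn_mono {J E E' : Finset (Finset V)} (hEE : E ⊆ E') {A B : Finset V}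
    (h : Conn J E A B) : Conn J E' A B := by
  induction h with
  | refl => exact Relation.ReflTransGen.refl
  | tail _ hs ih =>
      obtain ⟨h1, h2, e, he, h3, h4⟩ := hs
      exact ih.tail ⟨h1, h2, e, hEE he, h3, h4⟩

open Classical in
noncomputable def comp (J E : Finset (Finset V)) (A : Finset V) : Finset (Finset V) :=
  J.filter (fun B => Conn J E A B)

lemma mem_comp {J E : Finset (Finset V)} {A B : Finset V} :
    B ∈ comp J E A ↔ B ∈ J ∧ Conn J E A B := by
  simp [comp]

lemma comp_eq_of_conn {J E : Finset (Finset V)} {A B : Finset V}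
    (h : Conn J E A B) : comp J E A = comp J E B := by
  ext X
  simp only [mem_comp]
  exact ⟨fun ⟨hX, hc⟩ => ⟨hX, (conn_symm h).trans hc⟩, fun ⟨hX, hc⟩ => ⟨hX, h.trans hc⟩⟩

lemma conn_of_comp_eq {J E : Finset (Finset V)} {A B : Finset V}
    (hB : B ∈ J) (h : comp J E A = comp J E B) : Conn J E A B := by
  have : B ∈ comp J E B := mem_comp.2 ⟨hB, Relation.ReflTransGen.refl⟩
  rw [← h] at this
  exact (mem_comp.1 this).2

/-- number of connected components of `J` under edges `E` -/
noncomputable def ncomp (J E : Finset (Finset V)) : ℕ :=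
  (J.image (comp J E)).card

lemma ncomp_empty (J : Finset (Finset V)) : ncomp J (∅ : Finset (Finset V)) = J.card := by
  unfold ncomp
  apply Finset.card_image_of_injOn
  intro A hA B hB hAB
  have h := conn_of_comp_eq hB hAB
  cases h.cases_head with
  | inl h => exact h
  | inr h =>
      obtain ⟨c, ⟨_, _, e, he, _, _⟩, _⟩ := h
      exact absurd he (Finset.notMem_empty e)

/-- Adding an edge that merges two distinct components strictly decreases the count. -/
lemma ncomp_lt {J F : Finset (Finset V)} {e A B : Finset V}
    (he : e ∈ F) (hA : A ∈ J) (hB : B ∈ J) (hAe : A ⊆ e) (hBe : B ⊆ e)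
    (hnc : ¬ Conn J (F.erase e) A B) :
    ncomp J F + 1 ≤ ncomp J (F.erase e) := by
  classical
  set g := comp J (F.erase e) with hg
  set f := comp J F with hf
  have key : ∀ X ∈ J, ∀ Y ∈ J, g X = g Y → f X = f Y := by
    intro X hX Y hY hxy
    exact comp_eq_of_conn (conn_mono (Finset.erase_subset _ _) (conn_of_comp_eq hY hxy))
  have hfAB : f A = f B :=
    comp_eq_of_conn (Relation.ReflTransGen.single ⟨hA, hB, e, he, hAe, hBe⟩)
  have hgAB : g A ≠ g B := fun h => hnc (conn_of_comp_eq hB h)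
  -- map components of the erased graph to components of F
  set Φ : Finset (Finset V) → Finset (Finset V) :=
    fun S => if h : ∃ X, X ∈ J ∧ g X = S then f h.choose else ∅ with hΦ
  have hΦg : ∀ X ∈ J, Φ (g X) = f X := by
    intro X hX
    have h : ∃ Y, Y ∈ J ∧ g Y = g X := ⟨X, hX, rfl⟩
    simp only [hΦ, dif_pos h]
    exact key _ h.choose_spec.1 _ hX h.choose_spec.2
  have hsub : J.image f ⊆ ((J.image g).erase (g B)).image Φ := by
    intro S hS
    rw [Finset.mem_image] at hS
    obtain ⟨X, hX, rfl⟩ := hS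
    by_cases hXB : g X = g B
    · refine Finset.mem_image.2 ⟨g A, Finset.mem_erase.2 ⟨hgAB, Finset.mem_image_of_mem _ hA⟩, ?_⟩
      rw [hΦg A hA]
      exact hfAB.trans (key X hX B hB hXB).symm
    · exact Finset.mem_image.2 ⟨g X, Finset.mem_erase.2 ⟨hXB, Finset.mem_image_of_mem _ hX⟩,
        hΦg X hX⟩
  have h1 : (J.image f).card ≤ ((J.image g).erase (g B)).card :=
    le_trans (Finset.card_le_card hsub) (Finset.card_image_le)
  have h2 : ((J.image g).erase (g B)).card = (J.image g).card - 1 :=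
    Finset.card_erase_of_mem (Finset.mem_image_of_mem _ hB)
  have h3 : 1 ≤ (J.image g).card :=
    Finset.card_pos.2 ⟨g B, Finset.mem_image_of_mem _ hB⟩
  unfold ncomp
  rw [← hf, ← hg]
  omega

/-- If all `J`-sets inside `e` are connected avoiding `e`, then `e` is redundant. -/
lemma conn_erase_of_all {J E : Finset (Finset V)} {e : Finset V}
    (hall : ∀ X ∈ J, ∀ Y ∈ J, X ⊆ e → Y ⊆ e → Conn J (E.erase e) X Y)
    {A B : Finset V} (h : Conn J E A B) : Conn J (E.erase e) A B := by
  induction h with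
  | refl => exact Relation.ReflTransGen.refl
  | tail _ hs ih =>
      obtain ⟨h1, h2, f, hfE, h3, h4⟩ := hs
      by_cases hfe : f = e
      · subst hfe
        exact ih.trans (hall _ h1 _ h2 h3 h4)
      · exact ih.tail ⟨h1, h2, f, Finset.mem_erase.2 ⟨hfe, hfE⟩, h3, h4⟩

/-- Trav implies full connectivity. -/
lemma conn_of_walk {J E : Finset (Finset V)} :
    ∀ (m : ℕ) (es : Fin (m + 1) → Finset V) (A B : Finset V),
      A ∈ J → B ∈ J → (∀ i, es i ∈ E) → A ⊆ es 0 → B ⊆ es (Fin.last m) →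
      (∀ i : Fin m, ∃ I ∈ J, I ⊆ es i.castSucc ∧ I ⊆ es i.succ) →
      Conn J E A B := by
  intro m
  induction m with
  | zero =>
      intro es A B hA hB hes h0 hl _
      exact Relation.ReflTransGen.single ⟨hA, hB, es 0, hes 0, h0, hl⟩
  | succ m ih =>
      intro es A B hA hB hes h0 hl hint
      obtain ⟨I, hI, hI0, hI1⟩ := hint 0
      have hstep : Stp J E A I := by
        refine ⟨hA, hI, es 0, hes 0, h0, ?_⟩
        simpa using hI0
      have hrest : Conn J E I B := by
        refine ih (fun i => es i.succ) I B hI hB (fun i => hes _) ?_ ?_ ?_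
        · simpa using hI1
        · show B ⊆ es (Fin.last m).succ
          have : (Fin.last m).succ = Fin.last (m + 1) := by ext; simp
          rwa [this]
        · intro i
          obtain ⟨I', hI', h1, h2⟩ := hint i.succ
          refine ⟨I', hI', ?_, ?_⟩
          · have : (i.succ).castSucc = (i.castSucc).succ := by ext; simp
            rwa [this] at h1
          · exact h2
      exact (Relation.ReflTransGen.single hstep).trans hrest

lemma conn_of_trav {J E : Finset (Finset V)} (h : Trav J E) :
    ∀ A ∈ J, ∀ B ∈ J, Conn J E A B := by
  intro A hA B hB
  by_cases hAB : A = B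
  · exact hAB ▸ Relation.ReflTransGen.refl
  · obtain ⟨m, es, hes, h0, hl, hint⟩ := h A hA B hB hAB
    exact conn_of_walk m es A B hA hB hes h0 hl hint

/-- a TransGen chain yields a walk. -/
lemma walk_of_transGen {J E : Finset (Finset V)} {A B : Finset V}
    (h : Relation.TransGen (Stp J E) A B) :
    ∃ (m : ℕ) (es : Fin (m + 1) → Finset V),
      (∀ i, es i ∈ E) ∧ A ⊆ es 0 ∧ B ⊆ es (Fin.last m) ∧
      ∀ i : Fin m, ∃ I ∈ J, I ⊆ es i.castSucc ∧ I ⊆ es i.succ := by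
  induction h using Relation.TransGen.head_induction_on with
  | single hs =>
      obtain ⟨hA, hB, e, he, h1, h2⟩ := hs
      exact ⟨0, fun _ => e, fun _ => he, h1, h2, fun i => i.elim0⟩
  | head hs htg ihp =>
      rename_i A' C
      obtain ⟨hA', hC, e, he, h1, h2⟩ := hs
      obtain ⟨m, es, hes, h0, hl, hint⟩ := ihp
      refine ⟨m + 1, Fin.cases e es, ?_, ?_, ?_, ?_⟩
      · intro i
        induction i using Fin.cases with
        | zero => simpa using he
        | succ j => simpa using hes j
      · simpa using h1
      · have : Fin.last (m + 1) = (Fin.last m).succ := by ext; simp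
        rw [this]
        exact hl
      · intro i
        induction i using Fin.cases with
        | zero =>
            refine ⟨C, hC, ?_, ?_⟩
            · simpa using h2
            · have : (0 : Fin (m+1)).succ = Fin.succ 0 := rfl
              exact h0
        | succ j =>
            obtain ⟨I, hI, hi1, hi2⟩ := hint j
            refine ⟨I, hI, ?_, ?_⟩
            · have : (j.succ).castSucc = Fin.succ j.castSucc := by ext; simp
              rw [this]
              simpa using hi1
            · have : (j.succ).succ = Fin.succ j.succ := rfl
              rw [this]
              simpa using hi2

lemma trav_of_conn {J E : Finset (Finset V)}
    (h : ∀ A ∈ J, ∀ B ∈ J, Conn J E A B) : Trav J E := by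
  intro A hA B hB hAB
  have hc := h A hA B hB
  rcases (Relation.reflTransGen_iff_eq_or_transGen.1 hc) with heq | ht
  · exact absurd heq.symm hAB
  · exact walk_of_transGen ht

/-- The main counting lemma. -/
lemma main_count {J E : Finset (Finset V)} (htrav : Trav J E)
    (hmin : ∀ e ∈ E, ¬ Trav J (E.erase e)) :
    ∀ (n : ℕ) (F : Finset (Finset V)), F.card = n → F ⊆ E →
      ncomp J F + F.card ≤ J.card := by
  intro n
  induction n with
  | zero =>
      intro F hF _
      rw [Finset.card_eq_zero.1 hF]
      simp [ncomp_empty]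
  | succ n ih =>
      intro F hF hFE
      have hne : F.Nonempty := Finset.card_pos.1 (by omega)
      obtain ⟨e, he⟩ := hne
      have heE : e ∈ E := hFE he
      by_cases hcase : ∃ A ∈ J, ∃ B ∈ J, A ⊆ e ∧ B ⊆ e ∧ ¬ Conn J (F.erase e) A B
      · obtain ⟨A, hA, B, hB, hAe, hBe, hnc⟩ := hcase
        have h1 := ncomp_lt he hA hB hAe hBe hnc
        have h2 := ih (F.erase e) (by rw [Finset.card_erase_of_mem he]; omega)
          ((Finset.erase_subset _ _).trans hFE)
        rw [Finset.card_erase_of_mem he] at h2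
        omega
      · exfalso
        push_neg at hcase
        have hall : ∀ X ∈ J, ∀ Y ∈ J, X ⊆ e → Y ⊆ e → Conn J (E.erase e) X Y := by
          intro X hX Y hY h1 h2
          exact conn_mono (Finset.erase_subset_erase _ hFE) (hcase X hX Y hY h1 h2)
        apply hmin e heE
        apply trav_of_conn
        intro A hA B hB
        exact conn_erase_of_all hall (conn_of_trav htrav A hA B hB)

end EdgeMinAux


/-- **Claim (number of edges of an edge-minimal traversable pair).** If `J ⊆ V^{(j)}` is
nonempty, `E ⊆ V^{(k)}`, and `(J, E)` is an edge-minimal traversable pair (i.e. `J` is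
traversable in `(V, E)` but not in `(V, E \ {e})` for any `e ∈ E`), then `|E| ≤ |J| − 1`. -/
theorem edgeMin_pair_card_le (k j : ℕ) (hj : 1 ≤ j) (hjk : j ≤ k - 1)
    (V : Type*) [DecidableEq V] [Fintype V]
    (J E : Finset (Finset V))
    (hJ : J ⊆ (Finset.univ : Finset V).powersetCard j)
    (hE : E ⊆ (Finset.univ : Finset V).powersetCard k)
    (hne : J.Nonempty)
    (htrav : Trav J E)
    (hmin : ∀ e ∈ E, ¬ Trav J (E.erase e)) :
    E.card ≤ J.card - 1 := by
  classical
  obtain ⟨A0, hA0⟩ := hne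
  have hcount := EdgeMinAux.main_count htrav hmin E.card E rfl (Finset.Subset.refl E)
  have h1 : EdgeMinAux.ncomp J E = 1 := by
    unfold EdgeMinAux.ncomp
    rw [Finset.card_eq_one]
    refine ⟨EdgeMinAux.comp J E A0, ?_⟩
    apply Finset.Subset.antisymm
    · intro S hS
      rw [Finset.mem_image] at hS
      obtain ⟨X, hX, rfl⟩ := hS
      have := EdgeMinAux.comp_eq_of_conn (EdgeMinAux.conn_of_trav htrav A0 hA0 X hX)
      simp [← this]
    · intro S hS
      rw [Finset.mem_singleton] at hS
      subst hS
      exact Finset.mem_image_of_mem _ hA0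
  rw [h1] at hcount
  omega
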